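/- Let N ≥ 8 be an integer divisible by 4. If b ∈ ℝ^{N/2} satisfies ψ^{(i,j,k,l)}(b) = 0 for all (i,j,k,l) ∈ S_1 ∪ S_2, then ψ^{(i,j,k,l)}(b) = 0 for all (i,j,k,l) ∈ S with i ≠ 0. -/

import Mathlib

/-- `c_α = cos(απ/N)` -/
noncomputable def cc (N : ℕ) (a : ℤ) : ℝ := Real.cos (a * Real.pi / N)

/-- `s_α = sin(απ/N)` -/
noncomputable def ss (N : ℕ) (a : ℤ) : ℝ := Real.sin (a * Real.pi / N)

/-- `f_q^{(i,j,k,l)}` -/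
noncomputable def ff (N : ℕ) (i j k l : ℤ) (q : ℕ) : ℝ :=
  if Odd q then cc N (i * q) * cc N (j * q) * cc N (k * q) * cc N (l * q)
  else ss N (i * q) * ss N (j * q) * ss N (k * q) * ss N (l * q)

/-- `ψ^{(i,j,k,l)}(b)` -/
noncomputable def psi (N : ℕ) (b : Fin (N / 2) → ℝ) (i j k l : ℤ) : ℝ :=
  -∑ q : Fin (N / 2), (-1 : ℝ) ^ ((q : ℕ) + 1) * b q * ff N i j k l ((q : ℕ) + 1)

/-- `S = {(i,j,k,l) : −N_h ≤ i ≤ j ≤ k ≤ l ≤ N_h, i+j+k+l = N}` with `N_h = N/2 − 1`. -/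
def Sset (N : ℕ) : Set (ℤ × ℤ × ℤ × ℤ) :=
  {x | -((N : ℤ) / 2 - 1) ≤ x.1 ∧ x.1 ≤ x.2.1 ∧ x.2.1 ≤ x.2.2.1 ∧
    x.2.2.1 ≤ x.2.2.2 ∧ x.2.2.2 ≤ (N : ℤ) / 2 - 1 ∧
    x.1 + x.2.1 + x.2.2.1 + x.2.2.2 = (N : ℤ)}

/-- `S₁ = {(0, n+1, N/2−n, N/2−1) : 1 ≤ n ≤ N/4−1}` -/
def S1set (N : ℕ) : Set (ℤ × ℤ × ℤ × ℤ) :=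
  {x | ∃ n : ℤ, 1 ≤ n ∧ n ≤ (N : ℤ) / 4 - 1 ∧
    x = (0, n + 1, (N : ℤ) / 2 - n, (N : ℤ) / 2 - 1)}

/-- `S₂ = {(2−m, m, N/2−1, N/2−1) : m = 1 or 3 ≤ m ≤ N/4+1}` -/
def S2set (N : ℕ) : Set (ℤ × ℤ × ℤ × ℤ) :=
  {x | ∃ m : ℤ, (m = 1 ∨ (3 ≤ m ∧ m ≤ (N : ℤ) / 4 + 1)) ∧
    x = (2 - m, m, (N : ℤ) / 2 - 1, (N : ℤ) / 2 - 1)}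

open Real

private lemma idAA (x y z : ℝ) :
    8 * (Real.cos x * Real.cos y * Real.cos z * Real.cos (x + y + z)) =
    1 + Real.cos (x + x) + Real.cos (y + y) + Real.cos (z + z)
      + Real.cos (x + x + (y + y)) + Real.cos (x + x + (z + z)) + Real.cos (y + y + (z + z))
      + Real.cos (x + x + (y + y) + (z + z)) := by
  simp only [Real.cos_add, Real.sin_add]
  linear_combination
    (1 + (-1) * Real.sin z^2 + Real.cos z^2 + (-1) * Real.sin y^2 + Real.sin y^2 * Real.sin z^2 + (-1) * Real.sin y^2 * Real.cos z^2 + (-4) * Real.cos y * Real.sin y * Real.cos z * Real.sin z + Real.cos y^2 + (-1) * Real.cos y^2 * Real.sin z^2 + Real.cos y^2 * Real.cos z^2) * Real.sin_sq_add_cos_sq x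
    + ((-4) * Real.cos x * Real.sin x * Real.cos z * Real.sin z + 2 * Real.cos x^2 + (-2) * Real.cos x^2 * Real.sin z^2 + 2 * Real.cos x^2 * Real.cos z^2) * Real.sin_sq_add_cos_sq y
    + ((-4) * Real.cos x * Real.sin x * Real.cos y * Real.sin y + 4 * Real.cos x^2 * Real.cos y^2) * Real.sin_sq_add_cos_sq z

private lemma idBB (x y z : ℝ) :
    -(8 * (Real.sin x * Real.sin y * Real.sin z * Real.sin (x + y + z))) =
    1 - Real.cos (x + x) - Real.cos (y + y) - Real.cos (z + z)
      + Real.cos (x + x + (y + y)) + Real.cos (x + x + (z + z)) + Real.cos (y + y + (z + z))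
      - Real.cos (x + x + (y + y) + (z + z)) := by
  simp only [Real.cos_add, Real.sin_add]
  linear_combination
    ((-1) + (-1) * Real.sin z^2 + Real.cos z^2 + (-1) * Real.sin y^2 + 7 * Real.sin y^2 * Real.sin z^2 + Real.sin y^2 * Real.cos z^2 + (-4) * Real.cos y * Real.sin y * Real.cos z * Real.sin z + Real.cos y^2 + Real.cos y^2 * Real.sin z^2 + (-1) * Real.cos y^2 * Real.cos z^2) * Real.sin_sq_add_cos_sq x
    + ((-2) + 6 * Real.sin z^2 + 2 * Real.cos z^2 + (-4) * Real.cos x * Real.sin x * Real.cos z * Real.sin z + 2 * Real.cos x^2 + (-6) * Real.cos x^2 * Real.sin z^2 + (-2) * Real.cos x^2 * Real.cos z^2) * Real.sin_sq_add_cos_sq y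
    + (4 + (-4) * Real.cos y^2 + (-4) * Real.cos x * Real.sin x * Real.cos y * Real.sin y + (-4) * Real.cos x^2 + 4 * Real.cos x^2 * Real.cos y^2) * Real.sin_sq_add_cos_sq z

/-- `g_q(a) = cos(2 a q π / N)` -/
noncomputable def gg (N : ℕ) (q : ℕ) (a : ℤ) : ℝ := Real.cos (2 * a * q * Real.pi / N)

private lemma ff_eq (N : ℕ) (hN : 0 < N) (i j k l : ℤ) (hs : i + j + k + l = (N : ℤ)) (q : ℕ) :
    8 * ff N i j k l q =
      (-1 : ℝ) ^ q * (1 + gg N q (i + j) + gg N q (i + k) + gg N q (i + l))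
        - (gg N q i + gg N q j + gg N q k + gg N q l) := by
  have hNR : (N : ℝ) ≠ 0 := Nat.cast_ne_zero.2 hN.ne'
  have hl : (l : ℝ) = (N : ℝ) - i - j - k := by
    have : ((i : ℝ) + j + k + l) = (N : ℝ) := by exact_mod_cast congrArg (Int.cast : ℤ → ℝ) hs
    linarith
  set x : ℝ := i * q * π / N with hx
  set y : ℝ := j * q * π / N with hy
  set z : ℝ := k * q * π / N with hz
  have gi : gg N q i = Real.cos (x + x) := by rw [gg, hx]; congr 1; ring
  have gj : gg N q j = Real.cos (y + y) := by rw [gg, hy]; congr 1; ring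
  have gk : gg N q k = Real.cos (z + z) := by rw [gg, hz]; congr 1; ring
  have gl : gg N q l = Real.cos (x + x + (y + y) + (z + z)) := by
    rw [gg, show 2 * (l : ℝ) * q * π / N = q * (2 * π) - (x + x + (y + y) + (z + z)) by
      rw [hl, hx, hy, hz]; field_simp; ring]
    exact Real.cos_nat_mul_two_pi_sub _ q
  have gij : gg N q (i + j) = Real.cos (x + x + (y + y)) := by
    rw [gg, hx, hy]; push_cast; congr 1; ring
  have gik : gg N q (i + k) = Real.cos (x + x + (z + z)) := by
    rw [gg, hx, hz]; push_cast; congr 1; ring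
  have gil : gg N q (i + l) = Real.cos (y + y + (z + z)) := by
    rw [gg, show 2 * ((i : ℤ) + l : ℤ) * q * π / N = q * (2 * π) - (y + y + (z + z)) by
      push_cast; rw [hl, hy, hz]; field_simp; ring]
    exact Real.cos_nat_mul_two_pi_sub _ q
  rw [gi, gj, gk, gl, gij, gik, gil]
  rcases Nat.even_or_odd q with hq | hq
  · rw [ff, if_neg (Nat.not_odd_iff_even.mpr hq)]
    rw [show ss N (i * q) = Real.sin x by rw [ss, hx]; push_cast; ring_nf,
        show ss N (j * q) = Real.sin y by rw [ss, hy]; push_cast; ring_nf,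
        show ss N (k * q) = Real.sin z by rw [ss, hz]; push_cast; ring_nf,
        show ss N (l * q) = -Real.sin (x + y + z) by
          rw [ss, show ((l * q : ℤ) : ℝ) * π / N = q * π - (x + y + z) by
            push_cast; rw [hl, hx, hy, hz]; field_simp; ring,
            Real.sin_nat_mul_pi_sub, hq.neg_one_pow]; ring,
        hq.neg_one_pow]
    linear_combination idBB x y z
  · rw [ff, if_pos hq]
    rw [show cc N (i * q) = Real.cos x by rw [cc, hx]; push_cast; ring_nf,
        show cc N (j * q) = Real.cos y by rw [cc, hy]; push_cast; ring_nf,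
        show cc N (k * q) = Real.cos z by rw [cc, hz]; push_cast; ring_nf,
        show cc N (l * q) = -Real.cos (x + y + z) by
          rw [cc, show ((l * q : ℤ) : ℝ) * π / N = q * π - (x + y + z) by
            push_cast; rw [hl, hx, hy, hz]; field_simp; ring,
            Real.cos_nat_mul_pi_sub, hq.neg_one_pow]; ring,
        hq.neg_one_pow]
    linear_combination (-1 : ℝ) * idAA x y z

/-- `w(a) = ∑_q (-1)^q b_q cos(2 a q π/N)` -/
noncomputable def ww (N : ℕ) (b : Fin (N / 2) → ℝ) (a : ℤ) : ℝ :=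
  ∑ q : Fin (N / 2), (-1 : ℝ) ^ ((q : ℕ) + 1) * b q * gg N ((q : ℕ) + 1) a

private lemma gg_even (N : ℕ) (q : ℕ) (a : ℤ) : gg N q (-a) = gg N q a := by
  rw [gg, gg, show 2 * ((-a : ℤ) : ℝ) * q * π / N = -(2 * a * q * π / N) by push_cast; ring,
    Real.cos_neg]

private lemma gg_period (N : ℕ) (hN : 0 < N) (q : ℕ) (a : ℤ) : gg N q (a + N) = gg N q a := by
  have hNR : (N : ℝ) ≠ 0 := Nat.cast_ne_zero.2 hN.ne'
  rw [gg, gg, show 2 * ((a + (N : ℤ) : ℤ) : ℝ) * q * π / N = 2 * a * q * π / N + q * (2 * π) by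
    push_cast; field_simp]
  exact Real.cos_add_nat_mul_two_pi _ q

private lemma gg_shiftD (N : ℕ) (hN : 0 < N) (D : ℤ) (hD : (N : ℤ) = 2 * D) (q : ℕ) (a : ℤ) :
    gg N q (a + D) = (-1 : ℝ) ^ q * gg N q a := by
  have hNR : (N : ℝ) ≠ 0 := Nat.cast_ne_zero.2 hN.ne'
  have hDR : (N : ℝ) = 2 * (D : ℝ) := by exact_mod_cast hD
  rw [gg, gg, show 2 * ((a + D : ℤ) : ℝ) * q * π / N = q * π - -(2 * a * q * π / N) by
    push_cast; rw [show (D : ℝ) = (N : ℝ) / 2 by rw [hDR]; ring]; field_simp; ring,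
    Real.cos_nat_mul_pi_sub, Real.cos_neg]

private lemma gg_D (N : ℕ) (hN : 0 < N) (D : ℤ) (hD : (N : ℤ) = 2 * D) (q : ℕ) :
    gg N q D = (-1 : ℝ) ^ q := by
  have := gg_shiftD N hN D hD q 0
  rw [zero_add] at this
  rw [this, gg, show 2 * ((0 : ℤ) : ℝ) * q * π / N = 0 by push_cast; ring, Real.cos_zero, mul_one]

private lemma ww_even (N : ℕ) (b : Fin (N / 2) → ℝ) (a : ℤ) : ww N b (-a) = ww N b a := by
  unfold ww; exact Finset.sum_congr rfl fun q _ => by rw [gg_even]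

private lemma ww_period (N : ℕ) (hN : 0 < N) (b : Fin (N / 2) → ℝ) (a : ℤ) :
    ww N b (a + N) = ww N b a := by
  unfold ww; exact Finset.sum_congr rfl fun q _ => by rw [gg_period N hN]

private lemma psi_eq (N : ℕ) (hN : 0 < N) (D : ℤ) (hD : (N : ℤ) = 2 * D) (b : Fin (N / 2) → ℝ)
    (i j k l : ℤ) (hs : i + j + k + l = (N : ℤ)) :
    psi N b i j k l = (1 / 8) * (ww N b i + ww N b j + ww N b k + ww N b l - ww N b D
      - ww N b (i + j + D) - ww N b (i + k + D) - ww N b (i + l + D)) := by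
  have key : ∀ q ∈ (Finset.univ : Finset (Fin (N / 2))),
      (8 : ℝ) * ((-1 : ℝ) ^ ((q : ℕ) + 1) * b q * ff N i j k l ((q : ℕ) + 1)) =
        (-1 : ℝ) ^ ((q : ℕ) + 1) * b q * gg N ((q : ℕ) + 1) D
        + (-1 : ℝ) ^ ((q : ℕ) + 1) * b q * gg N ((q : ℕ) + 1) (i + j + D)
        + (-1 : ℝ) ^ ((q : ℕ) + 1) * b q * gg N ((q : ℕ) + 1) (i + k + D)
        + (-1 : ℝ) ^ ((q : ℕ) + 1) * b q * gg N ((q : ℕ) + 1) (i + l + D)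
        - (-1 : ℝ) ^ ((q : ℕ) + 1) * b q * gg N ((q : ℕ) + 1) i
        - (-1 : ℝ) ^ ((q : ℕ) + 1) * b q * gg N ((q : ℕ) + 1) j
        - (-1 : ℝ) ^ ((q : ℕ) + 1) * b q * gg N ((q : ℕ) + 1) k
        - (-1 : ℝ) ^ ((q : ℕ) + 1) * b q * gg N ((q : ℕ) + 1) l := by
    intro q _
    rw [gg_shiftD N hN D hD _ (i + j), gg_shiftD N hN D hD _ (i + k),
      gg_shiftD N hN D hD _ (i + l), gg_D N hN D hD,
      show (8 : ℝ) * ((-1 : ℝ) ^ ((q : ℕ) + 1) * b q * ff N i j k l ((q : ℕ) + 1)) =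
        (-1 : ℝ) ^ ((q : ℕ) + 1) * b q * (8 * ff N i j k l ((q : ℕ) + 1)) by ring,
      ff_eq N hN i j k l hs ((q : ℕ) + 1)]
    ring
  have h8 : ∑ q : Fin (N / 2),
      (8 : ℝ) * ((-1 : ℝ) ^ ((q : ℕ) + 1) * b q * ff N i j k l ((q : ℕ) + 1)) =
      ww N b D + ww N b (i + j + D) + ww N b (i + k + D) + ww N b (i + l + D)
        - ww N b i - ww N b j - ww N b k - ww N b l := by
    rw [Finset.sum_congr rfl key]
    simp only [ww, Finset.sum_add_distrib, Finset.sum_sub_distrib]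
  rw [← Finset.mul_sum] at h8
  unfold psi
  linarith [h8]

private lemma quad (t : ℤ) (ht : 2 ≤ t) (w : ℤ → ℝ)
    (heven : ∀ a : ℤ, w (-a) = w a)
    (H1 : ∀ n : ℤ, 1 ≤ n → n ≤ t - 1 →
      w 0 + w (n + 1) + w (2 * t - n) + w (2 * t - 1) - w (2 * t)
        - w (2 * t - n - 1) - w n - w 1 = 0)
    (H2 : ∀ m : ℤ, (m = 1 ∨ (3 ≤ m ∧ m ≤ t + 1)) →
      w (m - 2) + w m + 2 * w (2 * t - 1) - w (2 * t) - w (2 * t - 2) - 2 * w (m - 1) = 0) :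
    ∀ a : ℤ, 0 ≤ a → a ≤ 2 * t → w a = w 0 + (a : ℝ) ^ 2 * (w 1 - w 0) := by
  set β : ℝ := w 1 - w 0 with hβ
  have c2 : w (2 * t) + w (2 * t - 2) - 2 * w (2 * t - 1) = 2 * β := by
    have h := H2 1 (Or.inl rfl)
    rw [show (1 : ℤ) - 2 = -1 by norm_num, heven 1, show (1 : ℤ) - 1 = 0 by norm_num] at h
    rw [hβ]; linarith
  have step : ∀ m : ℤ, 3 ≤ m → m ≤ t + 1 →
      w m - w (m - 1) - (w (m - 1) - w (m - 2)) = 2 * β := by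
    intro m h3 hm
    have h := H2 m (Or.inr ⟨h3, hm⟩)
    linarith
  have d1 : w 2 - w 1 = 3 * β := by
    have h := H1 1 le_rfl (by omega)
    rw [show (2 * t - 1 - 1 : ℤ) = 2 * t - 2 by ring, show (1 : ℤ) + 1 = 2 by norm_num] at h
    rw [hβ]; linarith
  have dlowN : ∀ s : ℕ, (s : ℤ) + 1 ≤ t →
      w ((s : ℤ) + 1 + 1) - w ((s : ℤ) + 1) = (2 * ((s : ℝ) + 1) + 1) * β := by
    intro s
    induction s with
    | zero =>
      intro _
      norm_num
      linarith [d1]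
    | succ r ih =>
      intro hr
      have hih := ih (by push_cast at hr ⊢; omega)
      have hst := step ((r : ℤ) + 3) (by omega) (by push_cast at hr; omega)
      rw [show ((r : ℤ) + 3) - 1 = (r : ℤ) + 1 + 1 by ring,
        show ((r : ℤ) + 3) - 2 = (r : ℤ) + 1 by ring] at hst
      push_cast
      rw [show (r : ℤ) + 1 + 1 + 1 = (r : ℤ) + 3 by ring]
      linarith
  have dlow : ∀ a : ℤ, 1 ≤ a → a ≤ t → w (a + 1) - w a = (2 * (a : ℝ) + 1) * β := by
    intro a h1 h2
    obtain ⟨s, rfl⟩ : ∃ s : ℕ, a = (s : ℤ) + 1 := ⟨(a - 1).toNat, by omega⟩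
    have := dlowN s (by omega)
    push_cast
    linarith
  have dtop : w (2 * t) - w (2 * t - 1) = (4 * (t : ℝ) - 1) * β := by
    have h := H1 (t - 1) (by omega) (by omega)
    rw [show (2 : ℤ) * t - (t - 1) - 1 = t by ring, show (2 : ℤ) * t - (t - 1) = t + 1 by ring,
      show (t : ℤ) - 1 + 1 = t by ring] at h
    have e1 := dlow t (by omega) le_rfl
    have e2 := dlow (t - 1) (by omega) (by omega)
    rw [show (t : ℤ) - 1 + 1 = t by ring] at e2
    push_cast at e1 e2 ⊢
    linarith [hβ]
  have dhigh : ∀ a : ℤ, t ≤ a → a ≤ 2 * t - 1 → w (a + 1) - w a = (2 * (a : ℝ) + 1) * β := by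
    intro a h1 h2
    rcases eq_or_lt_of_le h2 with h | h
    · rw [h, show 2 * t - 1 + 1 = 2 * t by ring]
      push_cast
      linarith [dtop]
    · have h0 := H1 (2 * t - 1 - a) (by omega) (by omega)
      rw [show 2 * t - (2 * t - 1 - a) - 1 = a by ring,
        show 2 * t - (2 * t - 1 - a) = a + 1 by ring,
        show 2 * t - 1 - a + 1 = 2 * t - a by ring] at h0
      have hn := dlow (2 * t - 1 - a) (by omega) (by omega)
      rw [show 2 * t - 1 - a + 1 = 2 * t - a by ring] at hn
      push_cast at hn ⊢
      linarith [dtop, hβ]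
  have delta : ∀ a : ℤ, 0 ≤ a → a ≤ 2 * t - 1 → w (a + 1) - w a = (2 * (a : ℝ) + 1) * β := by
    intro a h0 h2
    rcases lt_or_ge a 1 with h | h
    · have ha : a = 0 := by omega
      rw [ha]
      norm_num
      exact hβ.symm
    rcases le_or_gt a t with h' | h'
    · exact dlow a h h'
    · exact dhigh a (by omega) h2
  have main : ∀ s : ℕ, (s : ℤ) ≤ 2 * t → w (s : ℤ) = w 0 + ((s : ℕ) : ℝ) ^ 2 * β := by
    intro s
    induction s with
    | zero => intro _; norm_num
    | succ r ih =>
      intro hr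
      have h1 := ih (by push_cast at hr ⊢; omega)
      have h2 := delta (r : ℤ) (by positivity) (by push_cast at hr; omega)
      push_cast
      push_cast at h1 h2
      linear_combination h1 + h2
  intro a h0 h2
  obtain ⟨s, rfl⟩ : ∃ s : ℕ, a = (s : ℤ) := ⟨a.toNat, (Int.toNat_of_nonneg h0).symm⟩
  have := main s h2
  push_cast at this ⊢
  linarith

set_option maxHeartbeats 2000000 in
theorem psi_zero_on_S_of_zero_on_S1_union_S2_ine_zero (N : ℕ) (hN4 : 4 ∣ N) (hN8 : 8 ≤ N)
    (b : Fin (N / 2) → ℝ)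
    (hb : ∀ x ∈ S1set N ∪ S2set N, psi N b x.1 x.2.1 x.2.2.1 x.2.2.2 = 0) :
    ∀ x ∈ Sset N, x.1 ≠ 0 → psi N b x.1 x.2.1 x.2.2.1 x.2.2.2 = 0 := by
  obtain ⟨tn, htn⟩ := hN4
  have hN0 : 0 < N := by omega
  have hNZ : (N : ℤ) = 4 * (tn : ℤ) := by exact_mod_cast htn
  set T : ℤ := (tn : ℤ) with hTdef
  have hT2 : 2 ≤ T := by
    have h8 : (8 : ℤ) ≤ (N : ℤ) := by exact_mod_cast hN8
    omega
  have h2T : (N : ℤ) / 2 = 2 * T := by omega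
  have h4T : (N : ℤ) / 4 = T := by omega
  have hD : (N : ℤ) = 2 * (2 * T) := by omega
  have Wper : ∀ a : ℤ, ww N b (a + 4 * T) = ww N b a := by
    intro a
    have := ww_period N hN0 b a
    rw [hNZ] at this
    exact this
  have Weven := ww_even N b
  have H1 : ∀ n : ℤ, 1 ≤ n → n ≤ T - 1 →
      ww N b 0 + ww N b (n + 1) + ww N b (2 * T - n) + ww N b (2 * T - 1) - ww N b (2 * T)
        - ww N b (2 * T - n - 1) - ww N b n - ww N b 1 = 0 := by
    intro n h1 h2
    have hmem : ((0 : ℤ), n + 1, 2 * T - n, 2 * T - 1) ∈ S1set N ∪ S2set N :=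
      Set.mem_union_left _ ⟨n, h1, by omega, by rw [h2T]⟩
    have h0 := hb _ hmem
    dsimp only at h0
    rw [psi_eq N hN0 (2 * T) hD b 0 (n + 1) (2 * T - n) (2 * T - 1) (by omega)] at h0
    have eA : ww N b (0 + (n + 1) + 2 * T) = ww N b (2 * T - n - 1) := by
      rw [show (0 + (n + 1) + 2 * T : ℤ) = -(2 * T - n - 1) + 4 * T by ring, Wper, Weven]
    have eB : ww N b (0 + (2 * T - n) + 2 * T) = ww N b n := by
      rw [show (0 + (2 * T - n) + 2 * T : ℤ) = -n + 4 * T by ring, Wper, Weven]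
    have eC : ww N b (0 + (2 * T - 1) + 2 * T) = ww N b 1 := by
      rw [show (0 + (2 * T - 1) + 2 * T : ℤ) = -1 + 4 * T by ring, Wper]
      exact Weven 1
    rw [eA, eB, eC] at h0
    linarith
  have H2 : ∀ m : ℤ, (m = 1 ∨ (3 ≤ m ∧ m ≤ T + 1)) →
      ww N b (m - 2) + ww N b m + 2 * ww N b (2 * T - 1) - ww N b (2 * T)
        - ww N b (2 * T - 2) - 2 * ww N b (m - 1) = 0 := by
    intro m hm
    have hmem : ((2 - m : ℤ), m, 2 * T - 1, 2 * T - 1) ∈ S1set N ∪ S2set N := by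
      refine Set.mem_union_right _ ⟨m, ?_, by rw [h2T]⟩
      rcases hm with h | h
      · exact Or.inl h
      · exact Or.inr ⟨h.1, by omega⟩
    have h0 := hb _ hmem
    dsimp only at h0
    rw [psi_eq N hN0 (2 * T) hD b (2 - m) m (2 * T - 1) (2 * T - 1) (by omega)] at h0
    have eA : ww N b (2 - m) = ww N b (m - 2) := by
      rw [show (2 - m : ℤ) = -(m - 2) by ring, Weven]
    have eB : ww N b (2 - m + m + 2 * T) = ww N b (2 * T - 2) := by
      rw [show (2 - m + m + 2 * T : ℤ) = -(2 * T - 2) + 4 * T by ring, Wper, Weven]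
    have eC : ww N b (2 - m + (2 * T - 1) + 2 * T) = ww N b (m - 1) := by
      rw [show (2 - m + (2 * T - 1) + 2 * T : ℤ) = -(m - 1) + 4 * T by ring, Wper, Weven]
    rw [eA, eB, eC] at h0
    linarith
  have Wq := quad T hT2 (ww N b) Weven H1 H2
  have WqAbs : ∀ a : ℤ, -(2 * T) ≤ a → a ≤ 2 * T →
      ww N b a = ww N b 0 + (a : ℝ) ^ 2 * (ww N b 1 - ww N b 0) := by
    intro a hlo hhi
    rcases le_or_gt 0 a with h | h
    · exact Wq a h hhi
    · have := Wq (-a) (by omega) (by omega)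
      rw [Weven] at this
      push_cast at this
      linear_combination this
  intro x hx hne
  obtain ⟨i, j, k, l⟩ := x
  simp only [Sset, Set.mem_setOf_eq] at hx
  obtain ⟨b1, b2, b3, b4, b5, hs⟩ := hx
  rw [h2T] at b1 b5
  dsimp only
  rw [psi_eq N hN0 (2 * T) hD b i j k l hs]
  have hc : (i : ℝ) + j + k + l = 4 * (T : ℝ) := by
    have h' : ((i + j + k + l : ℤ) : ℝ) = (((N : ℤ)) : ℝ) := by rw [hs]
    rw [hNZ] at h'
    push_cast at h'
    linarith
  have e1 := WqAbs i (by omega) (by omega)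
  have e2 := WqAbs j (by omega) (by omega)
  have e3 := WqAbs k (by omega) (by omega)
  have e4 := WqAbs l (by omega) (by omega)
  have e5 := WqAbs (2 * T) (by omega) (by omega)
  have e6 : ww N b (i + j + 2 * T) = ww N b 0
      + ((i + j - 2 * T : ℤ) : ℝ) ^ 2 * (ww N b 1 - ww N b 0) := by
    rw [show (i + j + 2 * T : ℤ) = (i + j - 2 * T) + 4 * T by ring, Wper]
    exact WqAbs _ (by omega) (by omega)
  have e7 : ww N b (i + k + 2 * T) = ww N b 0
      + ((i + k - 2 * T : ℤ) : ℝ) ^ 2 * (ww N b 1 - ww N b 0) := by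
    rw [show (i + k + 2 * T : ℤ) = (i + k - 2 * T) + 4 * T by ring, Wper]
    exact WqAbs _ (by omega) (by omega)
  have e8 : ww N b (i + l + 2 * T) = ww N b 0
      + ((i + l - 2 * T : ℤ) : ℝ) ^ 2 * (ww N b 1 - ww N b 0) := by
    rw [show (i + l + 2 * T : ℤ) = (i + l - 2 * T) + 4 * T by ring, Wper]
    exact WqAbs _ (by omega) (by omega)
  rw [e1, e2, e3, e4, e5, e6, e7, e8]
  push_cast
  linear_combination ((1 / 8 : ℝ) * (ww N b 1 - ww N b 0) * (4 * (T : ℝ) - 2 * (i : ℝ))) * hc
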